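/- Let h, g, σ, p > 0 with h < g and suppose p is large enough that α* = 1/2 + ((g−h)σ²)/(2ghp) ∈ (0,1). Then the secrecy rate at α*, namely log₂(1 + (1−α*)·h·p/σ²) − log₂(1 + (1−α*)·g·p/(α*·g·p + σ²)), is strictly positive. -/

import Mathlib

theorem stmt_13 (h g σ p : ℝ) (hh : 0 < h) (hg : 0 < g) (hσ : 0 < σ) (hp : 0 < p)
    (hlt : h < g)
    (a : ℝ) (ha : a = 1 / 2 + ((g - h) * σ^2) / (2 * g * h * p))
    (ha0 : 0 < a) (ha1 : a < 1) :
    0 < Real.logb 2 (1 + (1 - a) * h * p / σ^2)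
        - Real.logb 2 (1 + (1 - a) * g * p / (a * g * p + σ^2)) := by
  have hσ2 : (0:ℝ) < σ^2 := by positivity
  have hden : (0:ℝ) < a * g * p + σ^2 := by positivity
  have h1a : 0 < 1 - a := by linarith
  -- from a < 1 : (g-h)σ² < ghp
  have hghp : (0:ℝ) < 2 * g * h * p := by positivity
  have key : (g - h) * σ^2 < g * h * p := by
    have := ha1
    rw [ha] at this
    have h2 : ((g - h) * σ^2) / (2 * g * h * p) < 1/2 := by linarith
    have := (div_lt_iff₀ hghp).mp h2
    nlinarith
  -- main inequality: B < A
  have hBA : 1 + (1 - a) * g * p / (a * g * p + σ^2) < 1 + (1 - a) * h * p / σ^2 := by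
    have hagp : (g - h) * σ^2 < a * (g * h * p) := by
      rw [ha]
      have : ((g - h) * σ^2) / (2 * g * h * p) * (g * h * p)
          = (g - h) * σ^2 / 2 := by field_simp
      nlinarith
    have hdd : (1 - a) * g * p / (a * g * p + σ^2) < (1 - a) * h * p / σ^2 := by
      rw [div_lt_div_iff₀ hden hσ2]
      nlinarith [mul_pos h1a hp]
    linarith
  have hBpos : 0 < 1 + (1 - a) * g * p / (a * g * p + σ^2) := by positivity
  have := Real.logb_lt_logb (by norm_num : (1:ℝ) < 2) hBpos hBA
  linarith
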